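/- arXiv:1810.08504 — 3 statements merged into one kernel-verified Lean document; each statement's English description precedes it below -/
import Mathlib

section
/- Let f : ℝ → ℝ be continuous and let u : ℝ → ℝ be a bounded C² solution of -u'' = f(u) on ℝ such that u(x) → z⁻ as x → -∞, u(x) → z⁺ as x → +∞, and u'(x) → 0 as x → ±∞. Then ∫_{z⁻}^{z⁺} f(s) ds = 0. -/
open Filter intervalIntegral

theorem stmt_1 (f u : ℝ → ℝ) (zm zp : ℝ)
    (hf : Continuous f) (hu : ContDiff ℝ 2 u)
    (hbdd : ∃ M : ℝ, ∀ x, |u x| ≤ M)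
    (heq : ∀ x : ℝ, -(deriv (deriv u) x) = f (u x))
    (hum : Tendsto u atBot (nhds zm))
    (hup : Tendsto u atTop (nhds zp))
    (hdm : Tendsto (deriv u) atBot (nhds 0))
    (hdp : Tendsto (deriv u) atTop (nhds 0)) :
    ∫ s in zm..zp, f s = 0 := by
  set F : ℝ → ℝ := fun x => ∫ t in (0:ℝ)..x, f t with hF
  have hFd : ∀ x, HasDerivAt F (f x) x := fun x =>
    intervalIntegral.integral_hasDerivAt_right (hf.intervalIntegrable _ _)
      hf.aestronglyMeasurable.stronglyMeasurableAtFilter hf.continuousAt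
  have hFc : Continuous F :=
    continuous_iff_continuousAt.2 fun x => (hFd x).continuousAt
  have hud : Differentiable ℝ u := hu.differentiable (by norm_num)
  have hu'c : ContDiff ℝ 1 (deriv u) :=
    ((contDiff_succ_iff_deriv.mp (by exact_mod_cast hu : ContDiff ℝ (1+1) u)).2).2
  have hu'd : Differentiable ℝ (deriv u) := hu'c.differentiable (by norm_num)
  -- energy
  set E : ℝ → ℝ := fun x => (deriv u x)^2/2 + F (u x) with hE
  have hEd : ∀ x, HasDerivAt E 0 x := by
    intro x
    have h1 : HasDerivAt (fun x => (deriv u x)^2/2) (deriv u x * deriv (deriv u) x) x := by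
      have := ((hu'd x).hasDerivAt.pow 2).div_const 2
      exact this.congr_deriv (by norm_num; ring)
    have h2 : HasDerivAt (fun x => F (u x)) (f (u x) * deriv u x) x :=
      (hFd (u x)).comp x (hud x).hasDerivAt
    have := h1.add h2
    exact this.congr_deriv (by rw [← heq x]; ring)
  have hEconst : ∀ x y : ℝ, E x = E y := by
    intro x y
    have : ∀ z, deriv E z = 0 := fun z => (hEd z).deriv
    exact is_const_of_deriv_eq_zero (fun z => (hEd z).differentiableAt) this x y
  -- limits of E
  have hEtop : Tendsto E atTop (nhds (0^2/2 + F zp)) := by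
    apply Tendsto.add
    · exact ((hdp.pow 2).div_const 2)
    · exact (hFc.continuousAt.tendsto.comp hup)
  have hEbot : Tendsto E atBot (nhds (0^2/2 + F zm)) := by
    apply Tendsto.add
    · exact ((hdm.pow 2).div_const 2)
    · exact (hFc.continuousAt.tendsto.comp hum)
  have hEc : Tendsto E atTop (nhds (E 0)) := by
    have : E = fun _ => E 0 := funext fun x => hEconst x 0
    rw [this]; exact tendsto_const_nhds
  have hEc' : Tendsto E atBot (nhds (E 0)) := by
    have : E = fun _ => E 0 := funext fun x => hEconst x 0
    rw [this]; exact tendsto_const_nhds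
  have h1 : 0^2/2 + F zp = E 0 := tendsto_nhds_unique hEtop hEc
  have h2 : 0^2/2 + F zm = E 0 := tendsto_nhds_unique hEbot hEc'
  have hFeq : F zp = F zm := by linarith
  have : F zm + ∫ s in zm..zp, f s = F zp :=
    intervalIntegral.integral_add_adjacent_intervals (hf.intervalIntegrable _ _)
      (hf.intervalIntegrable _ _)
  linarith
end

section
/- Let φ : ℝ → ℝ be C¹ with φ(x) > 0 for all x, and let σ : ℝ → ℝ be C² such that the product v := φ·σ is bounded on ℝ and σ(x)·(φ²·σ')'(x) ≥ 0 for all x ∈ ℝ. Then σ is constant. -/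
/-- Riccati comparison: a globally defined differentiable function with
`h' ≥ h²/K²` and `h' ≥ 0` can never be positive. -/
lemma riccati_no_pos (h h' : ℝ → ℝ) (K : ℝ) (hK : 0 < K)
    (hd : ∀ x, HasDerivAt h (h' x) x)
    (hge : ∀ x, h x ^ 2 / K ^ 2 ≤ h' x)
    (hnn : ∀ x, 0 ≤ h' x) : ∀ a, h a ≤ 0 := by
  intro a
  by_contra hc
  push_neg at hc
  have hdiff : Differentiable ℝ h := fun x => (hd x).differentiableAt
  have hmono : Monotone h := monotone_of_deriv_nonneg hdiff fun x => by
    rw [(hd x).deriv]; exact hnn x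
  set c := h a with hca
  have hcx : ∀ x, a ≤ x → c ≤ h x := fun x hx => hmono hx
  set ψ : ℝ → ℝ := fun x => -(h x)⁻¹ - x / K ^ 2 with hψdef
  have hK2 : (0:ℝ) < K ^ 2 := by positivity
  have hψd : ∀ x, a ≤ x → HasDerivAt ψ (h' x / (h x) ^ 2 - 1 / K ^ 2) x := by
    intro x hx
    have hhx : h x ≠ 0 := ne_of_gt (lt_of_lt_of_le hc (hcx x hx))
    have h1 : HasDerivAt (fun y => (h y)⁻¹) (-(h' x) / (h x) ^ 2) x := (hd x).inv hhx
    have h2 : HasDerivAt (fun y => y / K ^ 2) (1 / K ^ 2) x := by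
      simpa using (hasDerivAt_id x).div_const (K ^ 2)
    have : HasDerivAt (fun y => -(h y)⁻¹ - y / K ^ 2) (-(-(h' x) / (h x) ^ 2) - 1 / K ^ 2) x := h1.neg.sub h2
    convert this using 1
    ring
  have hψmono : MonotoneOn ψ (Set.Ici a) := by
    apply monotoneOn_of_deriv_nonneg (convex_Ici a)
    · intro x hx
      exact ((hψd x hx).continuousAt).continuousWithinAt
    · intro x hx
      rw [interior_Ici] at hx
      exact ((hψd x (le_of_lt hx)).differentiableAt).differentiableWithinAt
    · intro x hx
      rw [interior_Ici] at hx
      rw [(hψd x (le_of_lt hx)).deriv]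
      have hhx : c ≤ h x := hcx x (le_of_lt hx)
      have hhx2 : (0:ℝ) < (h x) ^ 2 := pow_pos (lt_of_lt_of_le hc hhx) 2
      have := hge x
      rw [sub_nonneg, div_le_div_iff₀ hK2 hhx2]
      rw [div_le_iff₀ hK2] at this
      nlinarith
  set b := a + 2 * K ^ 2 / c with hbdef
  have hab : a ≤ b := by
    have h0 : (0:ℝ) < 2 * K ^ 2 / c := by positivity
    simp only [hbdef]
    linarith
  have hle : ψ a ≤ ψ b := hψmono Set.self_mem_Ici hab hab
  have hhb : c ≤ h b := hcx b hab
  have hhbpos : (0:ℝ) < h b := lt_of_lt_of_le hc hhb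
  have h1 : ψ a = -c⁻¹ - a / K ^ 2 := by simp [hψdef, hca]
  have h2 : ψ b = -(h b)⁻¹ - b / K ^ 2 := rfl
  rw [h1, h2, hbdef] at hle
  have hinvb : (h b)⁻¹ ≤ c⁻¹ := by
    apply inv_anti₀ hc hhb
  have hinvbpos : (0:ℝ) < (h b)⁻¹ := by positivity
  have : -(h b)⁻¹ ≥ -c⁻¹ + 2 / c := by
    have e : (a + 2 * K ^ 2 / c) / K ^ 2 = a / K ^ 2 + 2 / c := by
      rw [add_div]
      congr 1
      rw [div_div, mul_comm c (K ^ 2), ← div_div, mul_div_assoc, div_self (ne_of_gt hK2), mul_one]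
    rw [e] at hle
    linarith
  have hcinv : (0:ℝ) < c⁻¹ := by positivity
  have h2c : 2 / c = 2 * c⁻¹ := by rw [div_eq_mul_inv]
  rw [h2c] at this
  linarith

theorem stmt_9 (φ σ : ℝ → ℝ) (hφ : ContDiff ℝ 1 φ) (hφpos : ∀ x, 0 < φ x)
    (hσ : ContDiff ℝ 2 σ)
    (hbdd : ∃ M : ℝ, ∀ x, |φ x * σ x| ≤ M)
    (hineq : ∀ x : ℝ, 0 ≤ σ x * deriv (fun y => (φ y)^2 * deriv σ y) x) :
    ∀ x y : ℝ, σ x = σ y := by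
  obtain ⟨M, hM⟩ := hbdd
  set K := max M 1 with hKdef
  have hK : (0:ℝ) < K := lt_of_lt_of_le one_pos (le_max_right _ _)
  have hMK : ∀ x, |φ x * σ x| ≤ K := fun x => (hM x).trans (le_max_left _ _)
  have hσd : Differentiable ℝ σ := hσ.differentiable (by norm_num)
  have hσ2 : ContDiff ℝ ((1:ℕ) + 1) σ := by exact_mod_cast hσ
  have hσ' : ContDiff ℝ 1 (deriv σ) := (contDiff_succ_iff_deriv.mp hσ2).2.2
  set w : ℝ → ℝ := fun y => (φ y) ^ 2 * deriv σ y with hwdef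
  have hw : ContDiff ℝ 1 w := (hφ.pow 2).mul hσ'
  have hwd : Differentiable ℝ w := hw.differentiable (by norm_num)
  set h : ℝ → ℝ := fun x => σ x * w x with hhdef
  set h' : ℝ → ℝ := fun x => (φ x * deriv σ x) ^ 2 + σ x * deriv w x with hh'def
  have hdh : ∀ x, HasDerivAt h (h' x) x := by
    intro x
    have : HasDerivAt (fun y => σ y * w y) (deriv σ x * w x + σ x * deriv w x) x := ((hσd x).hasDerivAt).mul ((hwd x).hasDerivAt)
    convert this using 1
    simp only [hh'def, hwdef]
    ring
  have hnn : ∀ x, 0 ≤ h' x := by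
    intro x
    have h1 : (0:ℝ) ≤ (φ x * deriv σ x) ^ 2 := sq_nonneg _
    have h2 := hineq x
    simp only [hh'def]
    exact add_nonneg h1 h2
  have hge : ∀ x, h x ^ 2 / K ^ 2 ≤ h' x := by
    intro x
    have habs : (φ x * σ x) ^ 2 ≤ K ^ 2 := by
      have := hMK x
      nlinarith [abs_nonneg (φ x * σ x), sq_abs (φ x * σ x)]
    have hhx : h x ^ 2 = (φ x * σ x) ^ 2 * (φ x * deriv σ x) ^ 2 := by
      simp only [hhdef, hwdef]; ring
    have hK2 : (0:ℝ) < K ^ 2 := by positivity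
    rw [div_le_iff₀ hK2]
    have h2 := hineq x
    have h3 : (φ x * σ x) ^ 2 * (φ x * deriv σ x) ^ 2 ≤ K ^ 2 * (φ x * deriv σ x) ^ 2 := by
      nlinarith [sq_nonneg (φ x * deriv σ x)]
    simp only [hh'def]
    nlinarith
  have hpos := riccati_no_pos h h' K hK hdh hge hnn
  -- reflected function
  have hneg : ∀ x, 0 ≤ h x := by
    intro x
    set g : ℝ → ℝ := fun y => -h (-y) with hgdef
    set g' : ℝ → ℝ := fun y => h' (-y) with hg'def
    have hdg : ∀ y, HasDerivAt g (g' y) y := by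
      intro y
      have h1 : HasDerivAt (fun z : ℝ => -z) (-1 : ℝ) y := by
        simpa using (hasDerivAt_neg y)
      have h2 : HasDerivAt h (h' (-y)) (-y) := hdh (-y)
      have : HasDerivAt (fun z => -h (-z)) (-(h' (-y) * -1)) y := (h2.comp y h1).neg
      convert this using 1
      simp [hg'def]
    have hgge : ∀ y, g y ^ 2 / K ^ 2 ≤ g' y := by
      intro y
      have := hge (-y)
      simpa [hgdef, hg'def] using this
    have hgnn : ∀ y, 0 ≤ g' y := fun y => hnn (-y)
    have := riccati_no_pos g g' K hK hdg hgge hgnn (-x)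
    simp only [hgdef, neg_neg] at this
    linarith
  have hzero : ∀ x, h x = 0 := fun x => le_antisymm (hpos x) (hneg x)
  have hfun : h = fun _ => (0:ℝ) := funext hzero
  have hd0 : ∀ x, h' x = 0 := by
    intro x
    have := (hdh x).deriv
    rw [hfun] at this
    simp at this
    exact this.symm
  have hderiv0 : ∀ x, deriv σ x = 0 := by
    intro x
    have h0 := hd0 x
    have h1 : (0:ℝ) ≤ (φ x * deriv σ x) ^ 2 := sq_nonneg _
    have h2 := hineq x
    have h3 : (φ x * deriv σ x) ^ 2 = 0 := by
      simp only [hh'def] at h0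
      linarith
    have h4 : φ x * deriv σ x = 0 := by
      nlinarith
    have := (hφpos x).ne'
    rcases mul_eq_zero.mp h4 with h | h
    · exact absurd h this
    · exact h
  exact is_const_of_deriv_eq_zero hσd hderiv0
end

section
/- Let f : ℝ → ℝ be C¹ and u : [a,b] → ℝ a C² solution of -u'' = f(u) on [a,b] with Neumann boundary conditions u'(a) = u'(b) = 0. If u is stable, i.e., ∫_a^b (ψ'² - f'(u)ψ²) ≥ 0 for every C¹ function ψ : [a,b] → ℝ, then u is constant. -/
open Set intervalIntegral

lemma quad_aux {B C : ℝ} (h : ∀ t : ℝ, 0 ≤ 2*t*B + t^2*C) : B = 0 := by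
  have hC : 0 ≤ C := by nlinarith [h 1, h (-1)]
  have hc1 : (0:ℝ) < C + 1 := by linarith
  have ht := h (-B/(C+1))
  have ht2 : 0 ≤ (2 * (-B/(C+1)) * B + (-B/(C+1)) ^ 2 * C) * ((C+1)*(C+1)) :=
    mul_nonneg ht (by positivity)
  have heq : (2 * (-B/(C+1)) * B + (-B/(C+1)) ^ 2 * C) * ((C+1)*(C+1))
      = -2*B^2*(C+1) + B^2*C := by
    field_simp
  rw [heq] at ht2
  nlinarith [sq_nonneg B]

theorem stmt_10 (f u : ℝ → ℝ) (a b : ℝ) (hab : a < b)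
    (hf : ContDiff ℝ 1 f) (hu : ContDiffOn ℝ 2 u (Icc a b))
    (heq : ∀ x ∈ Icc a b,
      -(derivWithin (derivWithin u (Icc a b)) (Icc a b) x) = f (u x))
    (hNa : derivWithin u (Icc a b) a = 0) (hNb : derivWithin u (Icc a b) b = 0)
    (hstable : ∀ ψ : ℝ → ℝ, ContDiffOn ℝ 1 ψ (Icc a b) →
      0 ≤ ∫ x in a..b, ((derivWithin ψ (Icc a b) x)^2 - deriv f (u x) * (ψ x)^2)) :
    ∀ x ∈ Icc a b, ∀ y ∈ Icc a b, u x = u y := by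
  have hab' : a ≤ b := hab.le
  have hs : UniqueDiffOn ℝ (Icc a b) := uniqueDiffOn_Icc hab
  set V := derivWithin u (Icc a b) with hV_def
  set W := derivWithin V (Icc a b) with hW_def
  set c := fun x => deriv f (u x) with hc_def
  have ha_mem : a ∈ Icc a b := ⟨le_refl a, hab'⟩
  have hb_mem : b ∈ Icc a b := ⟨hab', le_refl b⟩
  -- regularity
  have hu1 : DifferentiableOn ℝ u (Icc a b) := hu.differentiableOn (by norm_num)
  have huc : ContinuousOn u (Icc a b) := hu1.continuousOn
  have hV1 : ContDiffOn ℝ 1 V (Icc a b) := hu.derivWithin hs (by norm_num)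
  have hVd : DifferentiableOn ℝ V (Icc a b) := hV1.differentiableOn (by norm_num)
  have hVc : ContinuousOn V (Icc a b) := hVd.continuousOn
  have hWeq : ∀ x ∈ Icc a b, W x = -(f (u x)) := by
    intro x hx
    have := heq x hx
    linarith
  have hW1 : ContDiffOn ℝ 1 W (Icc a b) := by
    have : ContDiffOn ℝ 1 (fun x => -(f (u x))) (Icc a b) :=
      (hf.comp_contDiffOn (hu.of_le one_le_two)).neg
    exact this.congr hWeq
  have hWd : DifferentiableOn ℝ W (Icc a b) := hW1.differentiableOn (by norm_num)
  have hWc : ContinuousOn W (Icc a b) := hWd.continuousOn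
  have hfd : Differentiable ℝ f := hf.differentiable (by norm_num)
  have hc_cont : ContinuousOn c (Icc a b) :=
    (hf.continuous_deriv le_rfl).comp_continuousOn huc
  -- pointwise derivatives
  have hdu : ∀ x ∈ Icc a b, HasDerivWithinAt u (V x) (Icc a b) x :=
    fun x hx => (hu1 x hx).hasDerivWithinAt
  have hdV : ∀ x ∈ Icc a b, HasDerivWithinAt V (W x) (Icc a b) x :=
    fun x hx => (hVd x hx).hasDerivWithinAt
  have hdW : ∀ x ∈ Icc a b, HasDerivWithinAt W (-(c x * V x)) (Icc a b) x := by
    intro x hx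
    have h1 : HasDerivWithinAt (fun y => -(f (u y))) (-(c x * V x)) (Icc a b) x := by
      have := ((hfd (u x)).hasDerivAt.comp_hasDerivWithinAt x (hdu x hx)).neg
      exact this
    exact h1.congr (fun y hy => hWeq y hy) (hWeq x hx)
  -- integrability helper
  have hII : ∀ g : ℝ → ℝ, ContinuousOn g (Icc a b) → IntervalIntegrable g MeasureTheory.volume a b := by
    intro g hg
    apply ContinuousOn.intervalIntegrable
    rwa [uIcc_of_le hab']
  -- FTC helper
  have ftc : ∀ (g g' : ℝ → ℝ), ContinuousOn g (Icc a b) →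
      (∀ x ∈ Icc a b, HasDerivWithinAt g (g' x) (Icc a b) x) →
      ContinuousOn g' (Icc a b) → ∫ x in a..b, g' x = g b - g a := by
    intro g g' hg hg' hg'c
    apply integral_eq_sub_of_hasDeriv_right_of_le hab' hg
    · intro x hx
      have hmem : Icc a b ∈ nhds x := Icc_mem_nhds hx.1 hx.2
      exact ((hg' x (Ioo_subset_Icc_self hx)).hasDerivAt hmem).hasDerivWithinAt
    · exact hII g' hg'c
  -- Step C : ∫ (W² - c V²) = 0
  have hQV : (∫ x in a..b, (W x^2 - c x * V x^2)) = 0 := by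
    have hG : ∀ x ∈ Icc a b, HasDerivWithinAt (fun y => V y * W y)
        (W x^2 - c x * V x^2) (Icc a b) x := by
      intro x hx
      have := (hdV x hx).mul (hdW x hx)
      exact this.congr_deriv (by ring)
    rw [ftc (fun y => V y * W y) _ (hVc.mul hWc) hG
      ((hWc.pow 2).sub (hc_cont.mul (hVc.pow 2)))]
    rw [show V b = 0 from hNb, show V a = 0 from hNa]
    ring
  -- the affine test function
  set d : ℝ := -(b-a)⁻¹ with hd_def
  set φ : ℝ → ℝ := fun x => (b - x) * (b-a)⁻¹ with hφ_def
  have hba : (0:ℝ) < b - a := by linarith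
  have hφa : φ a = 1 := by
    simp only [hφ_def]
    field_simp
  have hφb : φ b = 0 := by simp [hφ_def]
  have hdφ : ∀ x : ℝ, HasDerivAt φ d x := by
    intro x
    have h1 : HasDerivAt (fun y : ℝ => b - y) (-1) x := (hasDerivAt_id x).const_sub b
    have := h1.mul_const (b-a)⁻¹
    exact this.congr_deriv (by rw [hd_def]; ring)
  have hφ1 : ContDiffOn ℝ 1 φ (Icc a b) :=
    (((contDiff_const.sub contDiff_id).mul contDiff_const).contDiffOn : ContDiffOn ℝ 1 φ _)
  have hφc : ContinuousOn φ (Icc a b) := hφ1.continuousOn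
  -- the bilinear quantity
  set B : ℝ := ∫ x in a..b, (W x * d - c x * V x * φ x) with hB_def
  set C : ℝ := ∫ x in a..b, (d^2 - c x * φ x^2) with hC_def
  have hInt1 : IntervalIntegrable (fun x => W x^2 - c x * V x^2) MeasureTheory.volume a b :=
    hII _ ((hWc.pow 2).sub (hc_cont.mul (hVc.pow 2)))
  have hInt2 : IntervalIntegrable (fun x => W x * d - c x * V x * φ x) MeasureTheory.volume a b :=
    hII _ ((hWc.mul continuousOn_const).sub ((hc_cont.mul hVc).mul hφc))
  have hInt3 : IntervalIntegrable (fun x => d^2 - c x * φ x^2) MeasureTheory.volume a b :=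
    hII _ (continuousOn_const.sub (hc_cont.mul (hφc.pow 2)))
  have key : ∀ t : ℝ, 0 ≤ 2*t*B + t^2*C := by
    intro t
    have hψ1 : ContDiffOn ℝ 1 (fun x => V x + t * φ x) (Icc a b) :=
      hV1.add (hφ1.const_smul t)
    have hdψ : ∀ x ∈ Icc a b,
        derivWithin (fun x => V x + t * φ x) (Icc a b) x = W x + t * d := by
      intro x hx
      exact ((hdV x hx).add (((hdφ x).hasDerivWithinAt).const_mul t)).derivWithin (hs x hx)
    have h1 := hstable (fun x => V x + t * φ x) hψ1
    have h2 : (∫ x in a..b, ((derivWithin (fun x => V x + t * φ x) (Icc a b) x)^2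
          - c x * ((fun x => V x + t * φ x) x)^2))
        = ∫ x in a..b, ((W x^2 - c x * V x^2)
          + (2*t*(W x * d - c x * V x * φ x) + t^2*(d^2 - c x * φ x^2))) := by
      apply intervalIntegral.integral_congr
      intro x hx
      rw [uIcc_of_le hab'] at hx
      simp only [hdψ x hx]
      ring
    rw [h2] at h1
    rw [intervalIntegral.integral_add hInt1 ((hInt2.const_mul (2*t)).add (hInt3.const_mul (t^2)))] at h1
    rw [intervalIntegral.integral_add (hInt2.const_mul (2*t)) (hInt3.const_mul (t^2))] at h1
    rw [intervalIntegral.integral_const_mul, intervalIntegral.integral_const_mul] at h1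
    rw [hQV] at h1
    linarith
  have hB0 : B = 0 := quad_aux key
  -- IBP : B = -(W a)
  have hWa : W a = 0 := by
    have hH : ∀ x ∈ Icc a b, HasDerivWithinAt (fun y => W y * φ y)
        (W x * d - c x * V x * φ x) (Icc a b) x := by
      intro x hx
      have := (hdW x hx).mul ((hdφ x).hasDerivWithinAt)
      exact this.congr_deriv (by ring)
    have := ftc (fun y => W y * φ y) _ (hWc.mul hφc) hH
      ((hWc.mul continuousOn_const).sub ((hc_cont.mul hVc).mul hφc))
    rw [hB_def, this] at hB0
    simp only [hφa, hφb, mul_one, mul_zero, zero_sub, neg_eq_zero] at hB0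
    exact hB0
  -- Gronwall on E = V² + W²
  obtain ⟨M, hM⟩ := isCompact_Icc.exists_bound_of_continuousOn hc_cont
  set M0 : ℝ := max M 0 with hM0_def
  have hM0 : ∀ x ∈ Icc a b, |c x| ≤ M0 := fun x hx => le_trans (hM x hx) (le_max_left _ _)
  set K : ℝ := 1 + M0 with hK_def
  set E : ℝ → ℝ := fun x => V x^2 + W x^2 with hE_def
  have hEc : ContinuousOn E (Icc a b) := (hVc.pow 2).add (hWc.pow 2)
  have hE' : ∀ x ∈ Ico a b, HasDerivWithinAt E
      ((2*(V x)*(W x)) * (1 - c x)) (Ici x) x := by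
    intro x hx
    have hx' : x ∈ Icc a b := Ico_subset_Icc_self hx
    have hnh : Icc a b ∈ nhdsWithin x (Ici x) := by
      apply mem_nhdsWithin.2
      exact ⟨Iio b, isOpen_Iio, hx.2, fun y hy => ⟨le_trans hx.1 hy.2, le_of_lt hy.1⟩⟩
    have hV' : HasDerivWithinAt V (W x) (Ici x) x :=
      (hdV x hx').mono_of_mem_nhdsWithin hnh
    have hW' : HasDerivWithinAt W (-(c x * V x)) (Ici x) x :=
      (hdW x hx').mono_of_mem_nhdsWithin hnh
    have hmm : HasDerivWithinAt (fun y => V y * V y + W y * W y)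
        (W x * V x + V x * W x + (-(c x * V x) * W x + W x * -(c x * V x))) (Ici x) x :=
      (hV'.mul hV').add (hW'.mul hW')
    have hEmm : HasDerivWithinAt E
        (W x * V x + V x * W x + (-(c x * V x) * W x + W x * -(c x * V x))) (Ici x) x :=
      hmm.congr (fun y _ => by show V y^2 + W y^2 = V y * V y + W y * W y; ring)
        (by show V x^2 + W x^2 = V x * V x + W x * W x; ring)
    have hval : (2*(V x)*(W x)) * (1 - c x)
        = W x * V x + V x * W x + (-(c x * V x) * W x + W x * -(c x * V x)) := by ring
    rw [hval]
    exact hEmm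
  have hEa : E a = 0 := by
    show V a^2 + W a^2 = 0
    rw [show V a = 0 from hNa, hWa]
    ring
  have hbound : ∀ x ∈ Ico a b, ‖(2*(V x)*(W x)) * (1 - c x)‖ ≤ K * ‖E x‖ + 0 := by
    intro x hx
    have hx' : x ∈ Icc a b := Ico_subset_Icc_self hx
    have hcb := hM0 x hx'
    have hcb' := abs_le.1 hcb
    have hEpos : 0 ≤ E x := by positivity
    have hEeq : E x = V x^2 + W x^2 := rfl
    rw [Real.norm_eq_abs, Real.norm_eq_abs, abs_of_nonneg hEpos, abs_mul, add_zero]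
    have h2 : |2*(V x)*(W x)| ≤ V x^2 + W x^2 := by
      rw [abs_le]
      constructor
      · nlinarith [sq_nonneg (V x + W x)]
      · nlinarith [sq_nonneg (V x - W x)]
    have h3 : |1 - c x| ≤ K := by
      rw [abs_le]
      constructor
      · show -(1 + M0) ≤ 1 - c x
        linarith [hcb'.1, hcb'.2]
      · show 1 - c x ≤ 1 + M0
        linarith [hcb'.1, hcb'.2]
    calc |2*(V x)*(W x)| * |1 - c x| ≤ (V x^2 + W x^2) * K :=
          mul_le_mul h2 h3 (abs_nonneg _) (by positivity)
      _ = K * E x := by rw [hEeq]; ring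
  have h0 : ‖E a‖ ≤ (0:ℝ) := by
    rw [Real.norm_eq_abs, hEa, abs_zero]
  have hEzero : ∀ x ∈ Icc a b, E x = 0 := by
    intro x hx
    have := norm_le_gronwallBound_of_norm_deriv_right_le hEc hE' h0 hbound x hx
    rw [gronwallBound_ε0_δ0] at this
    have hEpos : 0 ≤ E x := by positivity
    rw [Real.norm_eq_abs, abs_of_nonneg hEpos] at this
    linarith
  have hVzero : ∀ x ∈ Icc a b, V x = 0 := by
    intro x hx
    have h : V x^2 + W x^2 = 0 := hEzero x hx
    have hV2 : V x^2 = 0 := by nlinarith [sq_nonneg (V x), sq_nonneg (W x)]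
    exact pow_eq_zero_iff two_ne_zero |>.mp hV2
  have hconst : ∀ x ∈ Icc a b, u x = u a :=
    constant_of_derivWithin_zero hu1 (fun x hx => hVzero x (Ico_subset_Icc_self hx))
  intro x hx y hy
  rw [hconst x hx, hconst y hy]
end
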